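/- Let R be a ring and let A, B, R₀, S be matrices over R giving a lag-ℓ shift equivalence from A to B (i.e. A^ℓ = R₀S, B^ℓ = SR₀, AR₀ = R₀B, SA = BS). Define over R[t] the block matrices U = [[1 + tA + ⋯ + (tA)^(ℓ-1), R₀],[-t^ℓ S, 1-tB]] and V = [[1-tA, -R₀],[t^ℓ S, 1 + tB + ⋯ + (tB)^(ℓ-1)]]. Then UV = I and VU = I; in particular U is invertible over R[t]. -/
import Mathlib


open Polynomial Matrix

/-- `X ^ k` is central in `R[X]`, so right scalar factors can be pulled out of
matrix products even when `R` is noncommutative. -/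
theorem mul_Xpow_smul {R : Type*} [Ring R] {l o p : Type*} [Fintype o]
    (k : ℕ) (M : Matrix l o (Polynomial R)) (N : Matrix o p (Polynomial R)) :
    M * ((X : Polynomial R) ^ k • N) = (X : Polynomial R) ^ k • (M * N) := by
  refine Matrix.ext fun i j => ?_
  rw [Matrix.smul_apply, Matrix.mul_apply, Matrix.mul_apply, smul_eq_mul, Finset.mul_sum]
  apply Finset.sum_congr rfl
  intro x _
  rw [Matrix.smul_apply, smul_eq_mul, ← mul_assoc, ← Polynomial.X_pow_mul, mul_assoc]

theorem Xsmul_pow {R : Type*} [Ring R] {l : Type*} [Fintype l] [DecidableEq l]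
    (M : Matrix l l (Polynomial R)) (k : ℕ) :
    ((X : Polynomial R) • M) ^ k = (X : Polynomial R) ^ k • M ^ k := by
  induction k with
  | zero => simp
  | succ k ih =>
    have h := mul_Xpow_smul (R := R) 1 (M ^ k) M
    rw [pow_one] at h
    rw [pow_succ, pow_succ, ih, Matrix.smul_mul, h, smul_smul, ← pow_succ, ← pow_succ]

/-- the intertwining matrix `U` of the PSE equation has the explicit
two-sided inverse `V` over `R[t]`; in particular `U` is invertible (a unit). -/
theorem pse_intertwiner_invertible (R : Type*) [Ring R] (n m ℓ : ℕ) (hℓ : 0 < ℓ)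
    (A : Matrix (Fin n) (Fin n) R) (B : Matrix (Fin m) (Fin m) R)
    (R₀ : Matrix (Fin n) (Fin m) R) (S : Matrix (Fin m) (Fin n) R)
    (h1 : A ^ ℓ = R₀ * S) (h2 : B ^ ℓ = S * R₀)
    (h3 : A * R₀ = R₀ * B) (h4 : S * A = B * S) :
    let tA : Matrix (Fin n) (Fin n) (Polynomial R) :=
      (X : Polynomial R) • A.map Polynomial.C
    let tB : Matrix (Fin m) (Fin m) (Polynomial R) :=
      (X : Polynomial R) • B.map Polynomial.C
    let R₀' : Matrix (Fin n) (Fin m) (Polynomial R) := R₀.map Polynomial.C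
    let S' : Matrix (Fin m) (Fin n) (Polynomial R) := S.map Polynomial.C
    let U : Matrix (Fin n ⊕ Fin m) (Fin n ⊕ Fin m) (Polynomial R) :=
      Matrix.fromBlocks (∑ i ∈ Finset.range ℓ, tA ^ i) R₀'
        (-((X : Polynomial R) ^ ℓ • S')) (1 - tB)
    let V : Matrix (Fin n ⊕ Fin m) (Fin n ⊕ Fin m) (Polynomial R) :=
      Matrix.fromBlocks (1 - tA) (-R₀')
        ((X : Polynomial R) ^ ℓ • S') (∑ i ∈ Finset.range ℓ, tB ^ i)
    U * V = 1 ∧ V * U = 1 ∧ IsUnit U := by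
  intro tA tB R₀' S' U V
  have hX1R : ∀ (M : Matrix (Fin n) (Fin m) (Polynomial R))
      (N : Matrix (Fin m) (Fin m) (Polynomial R)),
      M * ((X : Polynomial R) • N) = (X : Polynomial R) • (M * N) := by
    intro M N
    have := mul_Xpow_smul (R := R) 1 M N
    rwa [pow_one] at this
  have hX1S : ∀ (M : Matrix (Fin m) (Fin n) (Polynomial R))
      (N : Matrix (Fin n) (Fin n) (Polynomial R)),
      M * ((X : Polynomial R) • N) = (X : Polynomial R) • (M * N) := by
    intro M N
    have := mul_Xpow_smul (R := R) 1 M N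
    rwa [pow_one] at this
  have key3 : A.map (Polynomial.C) * R₀' = R₀' * B.map (Polynomial.C) := by
    simp only [R₀', ← Matrix.map_mul, h3]
  have key4 : S' * A.map (Polynomial.C) = B.map (Polynomial.C) * S' := by
    simp only [S', ← Matrix.map_mul, h4]
  have hAR : tA * R₀' = R₀' * tB := by
    show ((X : Polynomial R) • A.map Polynomial.C) * R₀'
        = R₀' * ((X : Polynomial R) • B.map Polynomial.C)
    rw [Matrix.smul_mul, key3, hX1R]
  have hSA : S' * tA = tB * S' := by
    show S' * ((X : Polynomial R) • A.map Polynomial.C)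
        = ((X : Polynomial R) • B.map Polynomial.C) * S'
    rw [hX1S, key4, Matrix.smul_mul]
  have mapA : ∀ i : ℕ, (A.map (Polynomial.C)) ^ i = (A ^ i).map Polynomial.C := by
    intro i
    induction i with
    | zero => simp [Matrix.map_one]
    | succ k ih => rw [pow_succ, pow_succ, ih, ← Matrix.map_mul]
  have mapB : ∀ i : ℕ, (B.map (Polynomial.C)) ^ i = (B ^ i).map Polynomial.C := by
    intro i
    induction i with
    | zero => simp [Matrix.map_one]
    | succ k ih => rw [pow_succ, pow_succ, ih, ← Matrix.map_mul]
  have hAl : tA ^ ℓ = (X : Polynomial R) ^ ℓ • (R₀' * S') := by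
    show ((X : Polynomial R) • A.map Polynomial.C) ^ ℓ = _
    rw [Xsmul_pow, mapA, h1, Matrix.map_mul]
  have hBl : tB ^ ℓ = (X : Polynomial R) ^ ℓ • (S' * R₀') := by
    show ((X : Polynomial R) • B.map Polynomial.C) ^ ℓ = _
    rw [Xsmul_pow, mapB, h2, Matrix.map_mul]
  have hpowR : ∀ i : ℕ, tA ^ i * R₀' = R₀' * tB ^ i := by
    intro i
    induction i with
    | zero => simp
    | succ k ih =>
      rw [pow_succ, pow_succ, Matrix.mul_assoc, hAR, ← Matrix.mul_assoc, ih,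
        Matrix.mul_assoc]
  have hpowS : ∀ i : ℕ, S' * tA ^ i = tB ^ i * S' := by
    intro i
    induction i with
    | zero => simp
    | succ k ih =>
      rw [pow_succ, pow_succ, ← Matrix.mul_assoc, ih, Matrix.mul_assoc, hSA,
        ← Matrix.mul_assoc]
  have hsumR : (∑ i ∈ Finset.range ℓ, tA ^ i) * R₀' = R₀' * ∑ i ∈ Finset.range ℓ, tB ^ i := by
    rw [Matrix.sum_mul, Matrix.mul_sum]
    exact Finset.sum_congr rfl fun i _ => hpowR i
  have hsumS : S' * (∑ i ∈ Finset.range ℓ, tA ^ i) = (∑ i ∈ Finset.range ℓ, tB ^ i) * S' := by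
    rw [Matrix.sum_mul, Matrix.mul_sum]
    exact Finset.sum_congr rfl fun i _ => hpowS i
  have geomA : (∑ i ∈ Finset.range ℓ, tA ^ i) * (1 - tA) = 1 - tA ^ ℓ := by
    have h' : (∑ i ∈ Finset.range ℓ, tA ^ i) * (-(1 - tA)) = -(1 - tA ^ ℓ) := by
      rw [neg_sub, neg_sub]; exact geom_sum_mul tA ℓ
    rw [mul_neg] at h'
    exact neg_injective h'
  have geomA' : (1 - tA) * (∑ i ∈ Finset.range ℓ, tA ^ i) = 1 - tA ^ ℓ := by
    have h' : (-(1 - tA)) * (∑ i ∈ Finset.range ℓ, tA ^ i) = -(1 - tA ^ ℓ) := by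
      rw [neg_sub, neg_sub]; exact mul_geom_sum tA ℓ
    rw [neg_mul] at h'
    exact neg_injective h'
  have geomB : (∑ i ∈ Finset.range ℓ, tB ^ i) * (1 - tB) = 1 - tB ^ ℓ := by
    have h' : (∑ i ∈ Finset.range ℓ, tB ^ i) * (-(1 - tB)) = -(1 - tB ^ ℓ) := by
      rw [neg_sub, neg_sub]; exact geom_sum_mul tB ℓ
    rw [mul_neg] at h'
    exact neg_injective h'
  have geomB' : (1 - tB) * (∑ i ∈ Finset.range ℓ, tB ^ i) = 1 - tB ^ ℓ := by
    have h' : (-(1 - tB)) * (∑ i ∈ Finset.range ℓ, tB ^ i) = -(1 - tB ^ ℓ) := by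
      rw [neg_sub, neg_sub]; exact mul_geom_sum tB ℓ
    rw [neg_mul] at h'
    exact neg_injective h'
  have hc1 : S' * (1 - tA) = (1 - tB) * S' := by
    rw [Matrix.mul_sub, Matrix.sub_mul, Matrix.mul_one, Matrix.one_mul, hSA]
  have hc2 : (1 - tA) * R₀' = R₀' * (1 - tB) := by
    rw [Matrix.sub_mul, Matrix.mul_sub, Matrix.one_mul, Matrix.mul_one, hAR]
  have hUV : U * V = 1 := by
    have e11 : (∑ i ∈ Finset.range ℓ, tA ^ i) * (1 - tA)
        + R₀' * ((X : Polynomial R) ^ ℓ • S') = 1 := by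
      rw [geomA, hAl, mul_Xpow_smul, sub_add_cancel]
    have e12 : (∑ i ∈ Finset.range ℓ, tA ^ i) * (-R₀')
        + R₀' * (∑ i ∈ Finset.range ℓ, tB ^ i) = 0 := by
      rw [Matrix.mul_neg, hsumR, neg_add_cancel]
    have e21 : (-((X : Polynomial R) ^ ℓ • S')) * (1 - tA)
        + (1 - tB) * ((X : Polynomial R) ^ ℓ • S') = 0 := by
      rw [Matrix.neg_mul, Matrix.smul_mul, hc1, mul_Xpow_smul, neg_add_cancel]
    have e22 : (-((X : Polynomial R) ^ ℓ • S')) * (-R₀')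
        + (1 - tB) * (∑ i ∈ Finset.range ℓ, tB ^ i) = 1 := by
      rw [Matrix.neg_mul, Matrix.mul_neg, neg_neg, Matrix.smul_mul, geomB', hBl,
        add_comm, sub_add_cancel]
    show Matrix.fromBlocks _ _ _ _ * Matrix.fromBlocks _ _ _ _ = 1
    rw [Matrix.fromBlocks_multiply, e11, e12, e21, e22, Matrix.fromBlocks_one]
  have hVU : V * U = 1 := by
    have f11 : (1 - tA) * (∑ i ∈ Finset.range ℓ, tA ^ i)
        + (-R₀') * (-((X : Polynomial R) ^ ℓ • S')) = 1 := by
      rw [geomA', Matrix.neg_mul, Matrix.mul_neg, neg_neg, mul_Xpow_smul, hAl,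
        sub_add_cancel]
    have f12 : (1 - tA) * R₀' + (-R₀') * (1 - tB) = 0 := by
      rw [hc2, Matrix.neg_mul, add_neg_cancel]
    have f21 : ((X : Polynomial R) ^ ℓ • S') * (∑ i ∈ Finset.range ℓ, tA ^ i)
        + (∑ i ∈ Finset.range ℓ, tB ^ i) * (-((X : Polynomial R) ^ ℓ • S')) = 0 := by
      rw [Matrix.smul_mul, hsumS, Matrix.mul_neg, mul_Xpow_smul, add_neg_cancel]
    have f22 : ((X : Polynomial R) ^ ℓ • S') * R₀'
        + (∑ i ∈ Finset.range ℓ, tB ^ i) * (1 - tB) = 1 := by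
      rw [Matrix.smul_mul, geomB, hBl, add_comm, sub_add_cancel]
    show Matrix.fromBlocks _ _ _ _ * Matrix.fromBlocks _ _ _ _ = 1
    rw [Matrix.fromBlocks_multiply, f11, f12, f21, f22, Matrix.fromBlocks_one]
  exact ⟨hUV, hVU, ⟨⟨U, V, hUV, hVU⟩, rfl⟩⟩
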